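/- On the elliptic curve E_s : Y^2 = X^3 + ((s-3)^2 - 12)/4 * X^2 + s*X over Q(s), the point A = (s, (s^2 - s)/2) is a point of order 6. -/

import Mathlib

open WeierstrassCurve

noncomputable def E16Curve : WeierstrassCurve.Affine (RatFunc ℚ) :=
  { a₁ := 0, a₂ := ((RatFunc.X - 3) ^ 2 - 12) / 4, a₃ := 0, a₄ := RatFunc.X, a₆ := 0 }

private lemma some_congr {F : Type*} [Field F] {W : WeierstrassCurve.Affine F}
    {x₁ y₁ x₂ y₂ : F} (h₁ : W.Nonsingular x₁ y₁) (h₂ : W.Nonsingular x₂ y₂)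
    (hx : x₁ = x₂) (hy : y₁ = y₂) :
    WeierstrassCurve.Affine.Point.some _ _ h₁ = WeierstrassCurve.Affine.Point.some _ _ h₂ := by
  subst hx; subst hy; rfl

instance : CharZero (RatFunc ℚ) :=
  charZero_of_injective_algebraMap (RatFunc.algebraMap_injective ℚ)

private lemma X_sub_one_ne_zero : (RatFunc.X : RatFunc ℚ) - 1 ≠ 0 := by
  have h := RatFunc.algebraMap_ne_zero (Polynomial.X_sub_C_ne_zero (1 : ℚ))
  simpa [map_sub, RatFunc.algebraMap_X] using h

open Classical in
theorem stmt_11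
    (hA : E16Curve.Nonsingular RatFunc.X ((RatFunc.X ^ 2 - RatFunc.X) / 2)) :
    addOrderOf (WeierstrassCurve.Affine.Point.some _ _ hA) = 6 := by
  set s : RatFunc ℚ := RatFunc.X with hs
  have h2 : (2 : RatFunc ℚ) ≠ 0 := by norm_num
  have h4 : (4 : RatFunc ℚ) ≠ 0 := by norm_num
  have hs0 : s ≠ 0 := RatFunc.X_ne_zero
  have hs1' : s - 1 ≠ 0 := X_sub_one_ne_zero
  have hs1 : s ≠ 1 := sub_ne_zero.mp hs1'
  have hyA0 : (s ^ 2 - s) / 2 ≠ 0 := by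
    apply div_ne_zero _ h2
    have : s ^ 2 - s = s * (s - 1) := by ring
    rw [this]
    exact mul_ne_zero hs0 hs1'
  have hnegY : ∀ x y : RatFunc ℚ, E16Curve.negY x y = -y := by
    intro x y; simp [WeierstrassCurve.Affine.negY, E16Curve]
  -- the point B = 2A = (1, (s-1)/2)
  have hB : E16Curve.Nonsingular 1 ((s - 1) / 2) := by
    rw [WeierstrassCurve.Affine.nonsingular_iff, WeierstrassCurve.Affine.equation_iff]
    constructor
    · show ((s - 1) / 2) ^ 2 + (0 : RatFunc ℚ) * _ * _ + (0 : RatFunc ℚ) * _ =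
        1 ^ 3 + ((s - 3) ^ 2 - 12) / 4 * 1 ^ 2 + s * 1 + 0
      field_simp
      ring
    · right
      show (s - 1) / 2 ≠ -((s - 1) / 2) - (0 : RatFunc ℚ) * 1 - 0
      intro h
      apply hs1'
      have h2y : 2 * ((s - 1) / 2) = 0 := by linear_combination h
      have : (s - 1) / 2 = 0 := (mul_eq_zero.mp h2y).resolve_left h2
      field_simp at this
      simpa using this
  -- the point C = 3A = (0, 0)
  have hC : E16Curve.Nonsingular 0 0 := by
    rw [WeierstrassCurve.Affine.nonsingular_iff, WeierstrassCurve.Affine.equation_iff]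
    constructor
    · show (0 : RatFunc ℚ) ^ 2 + (0 : RatFunc ℚ) * 0 * 0 + (0 : RatFunc ℚ) * 0 =
        0 ^ 3 + ((s - 3) ^ 2 - 12) / 4 * 0 ^ 2 + s * 0 + 0
      ring
    · left
      show (0 : RatFunc ℚ) * 0 ≠ 3 * 0 ^ 2 + 2 * (((s - 3) ^ 2 - 12) / 4) * 0 + s
      simpa [eq_comm] using hs0
  set P := WeierstrassCurve.Affine.Point.some _ _ hA with hP
  -- A is not 2-torsion
  have hyne : (s ^ 2 - s) / 2 ≠ E16Curve.negY s ((s ^ 2 - s) / 2) := by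
    rw [hnegY]
    intro h
    apply hyA0
    have h2y : 2 * ((s ^ 2 - s) / 2) = 0 := by linear_combination h
    exact (mul_eq_zero.mp h2y).resolve_left h2
  -- the slope at A
  have hslope : E16Curve.slope s s ((s ^ 2 - s) / 2) ((s ^ 2 - s) / 2) = (s + 1) / 2 := by
    rw [WeierstrassCurve.Affine.slope_of_Y_ne rfl hyne, hnegY]
    show (3 * s ^ 2 + 2 * (((s - 3) ^ 2 - 12) / 4) * s + s - 0 * ((s ^ 2 - s) / 2)) /
      ((s ^ 2 - s) / 2 - -((s ^ 2 - s) / 2)) = (s + 1) / 2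
    have hss : s ^ 2 - s ≠ 0 := by
      have hfac : s ^ 2 - s = s * (s - 1) := by ring
      rw [hfac]; exact mul_ne_zero hs0 hs1'
    have hden : (s ^ 2 - s) / 2 - -((s ^ 2 - s) / 2) = s ^ 2 - s := by ring
    rw [hden, div_eq_div_iff hss h2]
    field_simp
    ring
  -- 2A = B
  have e2 : P + P = WeierstrassCurve.Affine.Point.some _ _ hB := by
    rw [hP, WeierstrassCurve.Affine.Point.add_self_of_Y_ne hyne]
    apply some_congr
    · rw [WeierstrassCurve.Affine.addX, hslope]
      show ((s + 1) / 2) ^ 2 + 0 * ((s + 1) / 2) - ((s - 3) ^ 2 - 12) / 4 - s - s = 1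
      field_simp
      ring
    · rw [WeierstrassCurve.Affine.addY, hnegY, WeierstrassCurve.Affine.negAddY,
        WeierstrassCurve.Affine.addX, hslope]
      show -((s + 1) / 2 * (((s + 1) / 2) ^ 2 + 0 * ((s + 1) / 2) - ((s - 3) ^ 2 - 12) / 4
        - s - s - s) + (s ^ 2 - s) / 2) = (s - 1) / 2
      field_simp
      ring
  -- 3A = B + A = C
  have hxne : (1 : RatFunc ℚ) ≠ s := fun h => hs1 h.symm
  have hslope2 : E16Curve.slope 1 s ((s - 1) / 2) ((s ^ 2 - s) / 2) = (s - 1) / 2 := by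
    rw [WeierstrassCurve.Affine.slope_of_X_ne hxne]
    rw [div_eq_div_iff (sub_ne_zero.mpr hxne) h2]
    field_simp
  have e3 : WeierstrassCurve.Affine.Point.some _ _ hB + P = WeierstrassCurve.Affine.Point.some _ _ hC := by
    rw [hP, WeierstrassCurve.Affine.Point.add_of_X_ne hxne]
    apply some_congr
    · rw [WeierstrassCurve.Affine.addX, hslope2]
      show ((s - 1) / 2) ^ 2 + 0 * ((s - 1) / 2) - ((s - 3) ^ 2 - 12) / 4 - 1 - s = 0
      field_simp
      ring
    · rw [WeierstrassCurve.Affine.addY, hnegY, WeierstrassCurve.Affine.negAddY,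
        WeierstrassCurve.Affine.addX, hslope2]
      show -((s - 1) / 2 * (((s - 1) / 2) ^ 2 + 0 * ((s - 1) / 2) - ((s - 3) ^ 2 - 12) / 4
        - 1 - s - 1) + (s - 1) / 2) = 0
      field_simp
      ring
  have n2 : (2 : ℕ) • P = WeierstrassCurve.Affine.Point.some _ _ hB := by
    rw [two_nsmul]; exact e2
  have n3 : (3 : ℕ) • P = WeierstrassCurve.Affine.Point.some _ _ hC := by
    rw [show (3 : ℕ) = 2 + 1 from rfl, add_nsmul, n2, one_nsmul]; exact e3
  have n6 : (6 : ℕ) • P = 0 := by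
    rw [show (6 : ℕ) = 3 + 3 from rfl, add_nsmul, n3]
    exact WeierstrassCurve.Affine.Point.add_of_Y_eq rfl (by rw [hnegY]; ring)
  have hd : addOrderOf P ∣ 6 := addOrderOf_dvd_of_nsmul_eq_zero n6
  have hne1 : addOrderOf P ≠ 1 := by
    simp only [ne_eq, AddMonoid.addOrderOf_eq_one_iff]
    exact WeierstrassCurve.Affine.Point.some_ne_zero hA
  have hne2 : addOrderOf P ≠ 2 := by
    intro h
    have := addOrderOf_nsmul_eq_zero P
    rw [h, n2] at this
    exact WeierstrassCurve.Affine.Point.some_ne_zero hB this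
  have hne3 : addOrderOf P ≠ 3 := by
    intro h
    have := addOrderOf_nsmul_eq_zero P
    rw [h, n3] at this
    exact WeierstrassCurve.Affine.Point.some_ne_zero hC this
  have hne0 : addOrderOf P ≠ 0 := by
    intro h; rw [h] at hd; norm_num at hd
  have hle : addOrderOf P ≤ 6 := Nat.le_of_dvd (by norm_num) hd
  have hmem : addOrderOf P = 1 ∨ addOrderOf P = 2 ∨ addOrderOf P = 3 ∨ addOrderOf P = 6 := by
    have hpos : 0 < addOrderOf P := Nat.pos_of_ne_zero hne0
    rcases hd with ⟨k, hk⟩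
    interval_cases (addOrderOf P) <;> omega
  rcases hmem with h | h | h | h
  · exact absurd h hne1
  · exact absurd h hne2
  · exact absurd h hne3
  · exact h
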